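/- For every ε ∈ (0, 1/3), the minimum average length of a binary alphabetic code for three ordered symbols with probability distribution (ε, 1−2ε, ε) equals 2 − ε. -/
import Mathlib


/-- No codeword is a prefix of another. -/
def PrefixFree {n : ℕ} (w : Fin n → List Bool) : Prop :=
  ∀ i j : Fin n, i ≠ j → ¬ (w i <+: w j)

/-- The codewords are strictly increasing in the lexicographic order on binary strings. -/
def LexIncreasing {n : ℕ} (w : Fin n → List Bool) : Prop :=
  ∀ i j : Fin n, i < j → List.Lex (· < ·) (w i) (w j)

/-- A binary alphabetic code: prefix-free and lexicographically increasing codewords. -/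
def IsAlphabeticCode {n : ℕ} (w : Fin n → List Bool) : Prop :=
  PrefixFree w ∧ LexIncreasing w

lemma lex_lt_false {l : List Bool} (h : List.Lex (· < ·) l [false]) : l = [] := by
  cases h with
  | nil => rfl
  | cons h' => cases h'
  | rel h' => simp [Bool.lt_iff] at h'

lemma lex_gt_true {l : List Bool} (h : List.Lex (· < ·) [true] l) : [true] <+: l := by
  cases h with
  | cons h' => exact ⟨_, rfl⟩
  | rel h' => simp [Bool.lt_iff] at h'

lemma lex_gt_false {l : List Bool} (h : List.Lex (· < ·) [false] l) :
    [false] <+: l ∨ ∃ t, l = true :: t := by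
  cases h with
  | cons h' => exact Or.inl ⟨_, rfl⟩
  | rel h' =>
    rw [Bool.lt_iff] at h'
    exact Or.inr ⟨_, by rw [h'.2]⟩

lemma lex_true_cons {t : List Bool} (h : List.Lex (· < ·) (true :: t) [true]) : False := by
  cases h with
  | cons h' => cases h'
  | rel h' => simp [Bool.lt_iff] at h'

/-- For the distribution (ε, 1−2ε, ε), the minimum average length of a binary
alphabetic code equals 2 − ε. -/
theorem three_symbols_min (ε : ℝ) (hε : 0 < ε) (hε' : ε < 1 / 3) :
    IsLeast {x : ℝ | ∃ w : Fin 3 → List Bool, IsAlphabeticCode w ∧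
      x = ε * ((w 0).length : ℝ) + (1 - 2 * ε) * ((w 1).length : ℝ)
          + ε * ((w 2).length : ℝ)} (2 - ε) := by
  constructor
  · refine ⟨![[false, false], [false, true], [true]], ⟨?_, ?_⟩, ?_⟩
    · unfold PrefixFree; decide
    · unfold LexIncreasing; decide
    · simp [Matrix.cons_val_zero, Matrix.cons_val_one]
      ring
  · rintro x ⟨w, ⟨hpf, hlex⟩, rfl⟩
    have hne : ∀ i : Fin 3, w i ≠ [] := by
      intro i hi
      fin_cases i
      · exact hpf 0 1 (by decide) (hi ▸ List.nil_prefix)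
      · exact hpf 1 2 (by decide) (hi ▸ List.nil_prefix)
      · exact hpf 2 0 (by decide) (hi ▸ List.nil_prefix)
    have hlen : ∀ i : Fin 3, 1 ≤ (w i).length :=
      fun i => Nat.one_le_iff_ne_zero.mpr (fun h => hne i (List.length_eq_zero_iff.mp h))
    -- |w 1| ≥ 2
    have hb : 2 ≤ (w 1).length := by
      by_contra h
      have h1 : (w 1).length = 1 := by have := hlen 1; omega
      obtain ⟨b, hb⟩ := List.length_eq_one_iff.mp h1
      cases b
      · -- w 1 = [false] : then w 0 < [false] forces w 0 = []
        have := lex_lt_false (hb ▸ hlex 0 1 (by decide))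
        exact hne 0 this
      · -- w 1 = [true] : then [true] is a prefix of w 2
        have := lex_gt_true (hb ▸ hlex 1 2 (by decide))
        exact hpf 1 2 (by decide) (hb ▸ this)
    -- |w 0| + |w 2| ≥ 3
    have hac : 3 ≤ (w 0).length + (w 2).length := by
      by_contra h
      have h0 : (w 0).length = 1 := by have := hlen 0; have := hlen 2; omega
      have h2 : (w 2).length = 1 := by have := hlen 0; have := hlen 2; omega
      obtain ⟨a, ha⟩ := List.length_eq_one_iff.mp h0
      obtain ⟨c, hc⟩ := List.length_eq_one_iff.mp h2
      cases a
      · cases c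
        · -- w 2 = [false] : then w 1 < [false] forces w 1 = []
          exact hne 1 (lex_lt_false (hc ▸ hlex 1 2 (by decide)))
        · -- w 0 = [false], w 2 = [true]
          rcases lex_gt_false (ha ▸ hlex 0 1 (by decide)) with hpre | ⟨t, ht⟩
          · exact hpf 0 1 (by decide) (ha ▸ hpre)
          · exact lex_true_cons (ht ▸ hc ▸ hlex 1 2 (by decide))
      · -- w 0 = [true] : then [true] is a prefix of w 1
        exact hpf 0 1 (by decide) (ha ▸ lex_gt_true (ha ▸ hlex 0 1 (by decide)))
    have ha' : (1 : ℝ) ≤ (w 0).length := by exact_mod_cast hlen 0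
    have hc' : (1 : ℝ) ≤ (w 2).length := by exact_mod_cast hlen 2
    have hb' : (2 : ℝ) ≤ (w 1).length := by exact_mod_cast hb
    have hac' : (3 : ℝ) ≤ (w 0).length + (w 2).length := by exact_mod_cast hac
    nlinarith [hε, hε', ha', hc', hb', hac']
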